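/- For every integer n ≥ 1, the n-th Pell–Lucas number satisfies Q(n) = ((2·9^(n²+2n) − 2·9^(n²+n)) mod (9^(2n) − 2·9^n − 1)) mod 9^n. -/
import Mathlib


/-- The Pell–Lucas numbers: `Q(0) = 2`, `Q(1) = 2`, `Q(n+2) = 2·Q(n+1) + Q(n)`. -/
def pellLucas : ℕ → ℤ
  | 0 => 2
  | 1 => 2
  | n + 2 => 2 * pellLucas (n + 1) + pellLucas n

lemma pellLucas_zero : pellLucas 0 = 2 := rfl
lemma pellLucas_one : pellLucas 1 = 2 := rfl
lemma pellLucas_add_two (n : ℕ) :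
    pellLucas (n + 2) = 2 * pellLucas (n + 1) + pellLucas n := rfl

lemma pellLucas_pos : ∀ n, 0 < pellLucas n
  | 0 => by norm_num [pellLucas_zero]
  | 1 => by norm_num [pellLucas_one]
  | n + 2 => by
      have h1 := pellLucas_pos (n + 1)
      have h0 := pellLucas_pos n
      rw [pellLucas_add_two]; linarith

lemma pellLucas_lt : ∀ n, pellLucas (n + 1) < 3 ^ (n + 1)
  | 0 => by norm_num [pellLucas_one]
  | 1 => by norm_num [pellLucas_add_two, pellLucas_one, pellLucas_zero]
  | n + 2 => by
      have h1 := pellLucas_lt (n + 1)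
      have h0 := pellLucas_lt n
      rw [pellLucas_add_two]
      have e1 : (3 : ℤ) ^ (n + 1 + 1) = 3 * 3 ^ (n + 1) := by ring
      have e2 : (3 : ℤ) ^ (n + 2 + 1) = 9 * 3 ^ (n + 1) := by ring
      have e3 : (0 : ℤ) < 3 ^ (n + 1) := by positivity
      linarith

lemma pellLucas_key (B : ℤ) : ∀ n : ℕ, ∃ a : ℤ,
    2 * B ^ (n + 2) - 2 * B ^ (n + 1) =
      (B ^ 2 - 2 * B - 1) * a + (pellLucas (n + 1) * B + pellLucas n)
  | 0 => ⟨2, by rw [pellLucas_one, pellLucas_zero]; ring⟩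
  | 1 => ⟨2 * B + 2, by
      rw [show pellLucas 2 = 6 from rfl, pellLucas_one]; ring⟩
  | n + 2 => by
      obtain ⟨a, ha⟩ := pellLucas_key B (n + 1)
      obtain ⟨b, hb⟩ := pellLucas_key B n
      refine ⟨2 * a + b + 2 * B ^ (n + 1) * (B - 1), ?_⟩
      rw [pellLucas_add_two (n + 1), pellLucas_add_two n]
      linear_combination 2 * ha + hb + 2 * B * pellLucas_add_two n

theorem stmt_16 (n : ℕ) (hn : 1 ≤ n) :
    pellLucas n =
      ((2 * (9 : ℤ) ^ (n ^ 2 + 2 * n) - 2 * 9 ^ (n ^ 2 + n)) % ((9 : ℤ) ^ (2 * n) - 2 * 9 ^ n - 1))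
        % (9 : ℤ) ^ n := by
  rcases Nat.lt_or_ge n 2 with h2 | h2
  · interval_cases n
    norm_num [pellLucas_one]
  · -- n ≥ 2
    set B : ℤ := (9 : ℤ) ^ n with hB
    have e1 : (9 : ℤ) ^ (n ^ 2 + 2 * n) = B ^ (n + 2) := by
      rw [hB, ← pow_mul]; ring_nf
    have e2 : (9 : ℤ) ^ (n ^ 2 + n) = B ^ (n + 1) := by
      rw [hB, ← pow_mul]; ring_nf
    have e3 : (9 : ℤ) ^ (2 * n) = B ^ 2 := by
      rw [hB, ← pow_mul]; ring_nf
    rw [e1, e2, e3]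
    obtain ⟨a, ha⟩ := pellLucas_key B n
    set r : ℤ := pellLucas (n + 1) * B + pellLucas n with hr
    -- bounds
    have t9 : (9 : ℤ) ≤ 3 ^ n := by
      calc (9 : ℤ) = 3 ^ 2 := by norm_num
      _ ≤ 3 ^ n := pow_le_pow_right₀ (by norm_num) h2
    have h9 : B = 3 ^ n * 3 ^ n := by
      rw [hB, ← mul_pow]; norm_num
    obtain ⟨m, rfl⟩ : ∃ m, n = m + 1 := ⟨n - 1, by omega⟩
    have hQ : pellLucas (m + 1) < 3 ^ (m + 1) := pellLucas_lt m
    have hQ1 : pellLucas (m + 2) < 3 ^ (m + 2) := pellLucas_lt (m + 1)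
    have hQ1' : pellLucas (m + 2) < 3 * 3 ^ (m + 1) := by
      have : (3 : ℤ) ^ (m + 2) = 3 * 3 ^ (m + 1) := by ring
      linarith
    have hp : 0 < pellLucas (m + 1) := pellLucas_pos _
    have hp1 : 0 < pellLucas (m + 2) := pellLucas_pos _
    have hBpos : 0 < B := by rw [hB]; positivity
    have hrpos : 0 ≤ r := by rw [hr]; positivity
    have hrlt : r < B ^ 2 - 2 * B - 1 := by
      rw [hr, h9]
      set t : ℤ := 3 ^ (m + 1) with ht
      have htpos : (0 : ℤ) < t := by positivity
      have h1 : pellLucas (m + 2) * (t * t) + pellLucas (m + 1) < 3 * t * (t * t) + t := by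
        nlinarith
      have h2 : 3 * t * (t * t) + t ≤ (t * t) ^ 2 - 2 * (t * t) - 1 := by
        nlinarith [mul_le_mul_of_nonneg_right t9 (le_of_lt htpos),
          mul_le_mul_of_nonneg_right (mul_le_mul_of_nonneg_right t9 (le_of_lt htpos)) (le_of_lt htpos),
          mul_le_mul_of_nonneg_right (mul_le_mul_of_nonneg_right (mul_le_mul_of_nonneg_right t9 (le_of_lt htpos)) (le_of_lt htpos)) (le_of_lt htpos)]
      linarith
    have hmod1 : (2 * B ^ (m + 1 + 2) - 2 * B ^ (m + 1 + 1)) % (B ^ 2 - 2 * B - 1) = r := by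
      have ha' : 2 * B ^ (m + 1 + 2) - 2 * B ^ (m + 1 + 1) =
          r + (B ^ 2 - 2 * B - 1) * a := by linarith
      rw [ha', Int.add_mul_emod_self_left, Int.emod_eq_of_lt hrpos hrlt]
    have hr' : r = pellLucas (m + 1) + B * pellLucas (m + 1 + 1) := by rw [hr]; ring
    rw [hmod1, hr', Int.add_mul_emod_self_left,
      Int.emod_eq_of_lt (le_of_lt (pellLucas_pos _))]
    rw [h9]
    nlinarith [hQ, t9, hp]
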